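/- Let A ∈ ℂ^{n×n} be semi-dissipative, i.e. its Hermitian part (A + A^H)/2 is negative semi-definite, partitioned as A = [[A11, A12],[A21, A22]] with A22 ∈ ℂ^{q×q} invertible. Then the Schur complement A11 - A12 A22^{-1} A21 is also semi-dissipative. -/

import Mathlib

open Matrix
open scoped ComplexOrder

lemma quad_conjT {n : Type*} [Fintype n] (M : Matrix n n ℂ) (v : n → ℂ) :
    star v ⬝ᵥ (Mᴴ *ᵥ v) = star (star v ⬝ᵥ (M *ᵥ v)) := by
  rw [Matrix.mulVec_conjTranspose, star_dotProduct, star_star, ← Matrix.dotProduct_mulVec]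

/-- Schur complements of semi-dissipative matrices are semi-dissipative: if the Hermitian
part of `A = [[A11, A12],[A21, A22]]` is negative semi-definite and `A22` is invertible,
then the Hermitian part of `A11 - A12 A22⁻¹ A21` is negative semi-definite. -/
theorem stmt_14 (p q : ℕ)
    (A11 : Matrix (Fin p) (Fin p) ℂ) (A12 : Matrix (Fin p) (Fin q) ℂ)
    (A21 : Matrix (Fin q) (Fin p) ℂ) (A22 : Matrix (Fin q) (Fin q) ℂ)
    (hA : (-((1 / 2 : ℂ) • (Matrix.fromBlocks A11 A12 A21 A22 +
      (Matrix.fromBlocks A11 A12 A21 A22)ᴴ))).PosSemidef)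
    (hA22 : IsUnit A22) :
    (-((1 / 2 : ℂ) • ((A11 - A12 * A22⁻¹ * A21) +
      (A11 - A12 * A22⁻¹ * A21)ᴴ))).PosSemidef := by
  set S := A11 - A12 * A22⁻¹ * A21 with hSdef
  set A := Matrix.fromBlocks A11 A12 A21 A22 with hAdef
  have hA22d : IsUnit A22.det := (Matrix.isUnit_iff_isUnit_det A22).mp hA22
  have hinv : A22 * A22⁻¹ = 1 := Matrix.mul_nonsing_inv A22 hA22d
  refine Matrix.PosSemidef.of_dotProduct_mulVec_nonneg ?_ ?_
  · -- Hermitian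
    have h2 : star (1 / 2 : ℂ) = (1 / 2 : ℂ) := by norm_num
    simp [Matrix.IsHermitian, Matrix.conjTranspose_smul, Matrix.conjTranspose_add, h2,
      add_comm Sᴴ S]
    abel
  · intro x
    set y : Fin q → ℂ := -(A22⁻¹ *ᵥ (A21 *ᵥ x)) with hy
    set z : Fin p ⊕ Fin q → ℂ := Sum.elim x y with hz
    have hmul : A *ᵥ z = Sum.elim (S *ᵥ x) 0 := by
      rw [hAdef, hz, Matrix.fromBlocks_mulVec]
      simp only [Sum.elim_comp_inl, Sum.elim_comp_inr, hy, Matrix.mulVec_neg,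
        Matrix.mulVec_mulVec, hSdef, Matrix.sub_mulVec]
      have hinv2 : A22 * (A22⁻¹ * A21) = A21 := by
        rw [← Matrix.mul_assoc, hinv, Matrix.one_mul]
      rw [hinv2]
      simp [sub_eq_add_neg, Matrix.mul_assoc]
    have hquadA : star z ⬝ᵥ (A *ᵥ z) = star x ⬝ᵥ (S *ᵥ x) := by
      rw [hmul, hz, Function.star_sumElim, sumElim_dotProduct_sumElim,
        dotProduct_zero, add_zero]
    have key : star z ⬝ᵥ ((A + Aᴴ) *ᵥ z) = star x ⬝ᵥ ((S + Sᴴ) *ᵥ x) := by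
      rw [Matrix.add_mulVec, dotProduct_add, Matrix.add_mulVec,
        dotProduct_add, quad_conjT, quad_conjT, hquadA]
    have := hA.dotProduct_mulVec_nonneg z
    calc (0 : ℂ) ≤ star z ⬝ᵥ ((-((1 / 2 : ℂ) • (A + Aᴴ))) *ᵥ z) := this
      _ = star x ⬝ᵥ ((-((1 / 2 : ℂ) • (S + Sᴴ))) *ᵥ x) := by
          rw [Matrix.neg_mulVec, dotProduct_neg, Matrix.smul_mulVec,
            dotProduct_smul, key, Matrix.neg_mulVec, dotProduct_neg,
            Matrix.smul_mulVec, dotProduct_smul]
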